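/- In the Euclidean plane, at most two half-planes of the form {x : ⟨a_i, x⟩ ≤ -1} with unit vectors a_i can appear as irredundant supporting half-planes of a weakly circumscribed polygon: if three half-planes {⟨a_i,x⟩ ≤ -1}, i = 1,2,3, with unit normals a_i have nonempty common intersection, then one of them contains the intersection of the other two (one inequality is redundant). -/

import Mathlib

open scoped RealInnerProductSpace

private lemma aux_red (b c d : EuclideanSpace ℝ (Fin 2)) (hb : ‖b‖ = 1) (hc : ‖c‖ = 1)
    (hd : ‖d‖ = 1) (g₁ g₂ g₃ : ℝ) (hsum : g₁ • b + g₂ • c + g₃ • d = 0)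
    (h1 : g₁ ≠ 0) (h2 : g₂ * g₁ ≤ 0) (h3 : g₃ * g₁ ≤ 0) (x : EuclideanSpace ℝ (Fin 2))
    (hcx : ⟪c, x⟫ ≤ -1) (hdx : ⟪d, x⟫ ≤ -1) : ⟪b, x⟫ ≤ -1 := by
  set s : ℝ := -g₂ / g₁ with hs_def
  set t : ℝ := -g₃ / g₁ with ht_def
  have hs : 0 ≤ s := by
    have : s = (-(g₂ * g₁)) / (g₁ ^ 2) := by field_simp [hs_def]; rw [hs_def, div_mul_cancel₀ _ h1]
    rw [this]
    exact div_nonneg (by linarith) (sq_nonneg _)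
  have ht : 0 ≤ t := by
    have : t = (-(g₃ * g₁)) / (g₁ ^ 2) := by field_simp [ht_def]; rw [ht_def, div_mul_cancel₀ _ h1]
    rw [this]
    exact div_nonneg (by linarith) (sq_nonneg _)
  have hb' : b = s • c + t • d := by
    have h : g₁ • b = (-g₂) • c + (-g₃) • d := by
      linear_combination (norm := module) hsum
    have h2 := congrArg (fun v => g₁⁻¹ • v) h
    simp only [smul_add, smul_smul, inv_mul_cancel₀ h1, one_smul] at h2
    rw [h2, hs_def, ht_def]
    rw [div_eq_inv_mul, div_eq_inv_mul]
  have hst : (1:ℝ) ≤ s + t := by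
    have hcalc : (1:ℝ) ≤ s * 1 + t * 1 := by
      calc (1:ℝ) = ‖b‖ := hb.symm
        _ = ‖s • c + t • d‖ := by rw [hb']
        _ ≤ ‖s • c‖ + ‖t • d‖ := norm_add_le _ _
        _ = s * ‖c‖ + t * ‖d‖ := by
            rw [norm_smul, norm_smul, Real.norm_eq_abs, Real.norm_eq_abs,
              abs_of_nonneg hs, abs_of_nonneg ht]
        _ = s * 1 + t * 1 := by rw [hc, hd]
    linarith
  have hbx : ⟪b, x⟫ = s * ⟪c, x⟫ + t * ⟪d, x⟫ := by
    rw [hb', inner_add_left, real_inner_smul_left, real_inner_smul_left]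
  nlinarith [mul_le_mul_of_nonneg_left hcx hs, mul_le_mul_of_nonneg_left hdx ht]

private lemma aux_contra (a : Fin 3 → EuclideanSpace ℝ (Fin 2)) (g : Fin 3 → ℝ)
    (hsum : g 0 • a 0 + g 1 • a 1 + g 2 • a 2 = 0) (x : EuclideanSpace ℝ (Fin 2))
    (hx : ∀ i, ⟪a i, x⟫ ≤ -1) (hg : ∀ i, 0 ≤ g i) (i0 : Fin 3) (h0 : g i0 ≠ 0) : False := by
  have hsum' : g 0 * ⟪a 0, x⟫ + g 1 * ⟪a 1, x⟫ + g 2 * ⟪a 2, x⟫ = 0 := by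
    have := congrArg (fun v => ⟪v, x⟫) hsum
    simp only [inner_add_left, real_inner_smul_left, inner_zero_left] at this
    exact this
  have h0' : 0 < g i0 := (hg i0).lt_of_ne (Ne.symm h0)
  have e0 := mul_le_mul_of_nonneg_left (hx 0) (hg 0)
  have e1 := mul_le_mul_of_nonneg_left (hx 1) (hg 1)
  have e2 := mul_le_mul_of_nonneg_left (hx 2) (hg 2)
  fin_cases i0 <;> simp at h0' <;> nlinarith [hg 0, hg 1, hg 2]

private lemma aux_pick (a : Fin 3 → EuclideanSpace ℝ (Fin 2)) (ha : ∀ i, ‖a i‖ = 1)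
    (g : Fin 3 → ℝ) (i j k : Fin 3) (hji : j ≠ i) (hki : k ≠ i)
    (hsum : g i • a i + g j • a j + g k • a k = 0)
    (hgi : g i ≠ 0) (hj : g j * g i ≤ 0) (hk : g k * g i ≤ 0) :
    ∃ i : Fin 3, ∀ x : EuclideanSpace ℝ (Fin 2),
      (∀ j, j ≠ i → ⟪a j, x⟫ ≤ -1) → ⟪a i, x⟫ ≤ -1 :=
  ⟨i, fun x hx => aux_red (a i) (a j) (a k) (ha i) (ha j) (ha k) _ _ _ hsum hgi hj hk x
    (hx j hji) (hx k hki)⟩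

theorem stmt12 (a : Fin 3 → EuclideanSpace ℝ (Fin 2))
    -- three half-planes {x | ⟪aᵢ,x⟫ ≤ -1} with unit normals
    (ha : ∀ i, ‖a i‖ = 1)
    -- with nonempty common intersection
    (hne : (⋂ i, {x : EuclideanSpace ℝ (Fin 2) | ⟪a i, x⟫ ≤ -1}).Nonempty) :
    -- one of them contains the intersection of the other two
    ∃ i : Fin 3, ∀ x : EuclideanSpace ℝ (Fin 2),
      (∀ j, j ≠ i → ⟪a j, x⟫ ≤ -1) → ⟪a i, x⟫ ≤ -1 := by
  have hli : ¬ LinearIndependent ℝ a := by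
    intro h
    have := h.fintype_card_le_finrank
    simp [finrank_euclideanSpace] at this
  obtain ⟨g, hsum, i0, hgi0⟩ := Fintype.not_linearIndependent_iff.mp hli
  rw [Fin.sum_univ_three] at hsum
  obtain ⟨x₀, hx₀⟩ := hne
  have hx : ∀ i, ⟪a i, x₀⟫ ≤ -1 := by
    intro i
    exact Set.mem_iInter.mp hx₀ i
  by_cases hall : ∀ i, 0 ≤ g i
  · exact (aux_contra a g hsum x₀ hx hall i0 hgi0).elim
  by_cases hall' : ∀ i, g i ≤ 0
  · refine (aux_contra a (fun i => -g i) ?_ x₀ hx (fun i => by simpa using hall' i) i0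
      (by simpa using hgi0)).elim
    simp only [neg_smul]
    rw [← neg_add, ← neg_add, hsum, neg_zero]
  push_neg at hall hall'
  obtain ⟨i, hi⟩ := hall
  obtain ⟨j, hj⟩ := hall'
  have hij : i ≠ j := by rintro rfl; linarith
  fin_cases i <;> fin_cases j <;> simp only [Fin.isValue, Fin.mk_zero, Fin.mk_one, Fin.reduceFinMk] at hi hj hij
  · exact absurd rfl hij
  · -- i = 0 (negative), j = 1 (positive), k = 2
    rcases le_or_gt (g 2) 0 with hk | hk
    · exact aux_pick a ha g 1 0 2 (by decide) (by decide)
        (by linear_combination (norm := module) hsum) (ne_of_gt hj) (by nlinarith) (by nlinarith)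
    · exact aux_pick a ha g 0 1 2 (by decide) (by decide)
        (by linear_combination (norm := module) hsum) (ne_of_lt hi) (by nlinarith) (by nlinarith)
  · -- i = 0 (negative), j = 2 (positive), k = 1
    rcases le_or_gt (g 1) 0 with hk | hk
    · exact aux_pick a ha g 2 0 1 (by decide) (by decide)
        (by linear_combination (norm := module) hsum) (ne_of_gt hj) (by nlinarith) (by nlinarith)
    · exact aux_pick a ha g 0 2 1 (by decide) (by decide)
        (by linear_combination (norm := module) hsum) (ne_of_lt hi) (by nlinarith) (by nlinarith)
  · -- i = 1 (negative), j = 0 (positive), k = 2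
    rcases le_or_gt (g 2) 0 with hk | hk
    · exact aux_pick a ha g 0 1 2 (by decide) (by decide)
        (by linear_combination (norm := module) hsum) (ne_of_gt hj) (by nlinarith) (by nlinarith)
    · exact aux_pick a ha g 1 0 2 (by decide) (by decide)
        (by linear_combination (norm := module) hsum) (ne_of_lt hi) (by nlinarith) (by nlinarith)
  · exact absurd rfl hij
  · -- i = 1 (negative), j = 2 (positive), k = 0
    rcases le_or_gt (g 0) 0 with hk | hk
    · exact aux_pick a ha g 2 1 0 (by decide) (by decide)
        (by linear_combination (norm := module) hsum) (ne_of_gt hj) (by nlinarith) (by nlinarith)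
    · exact aux_pick a ha g 1 2 0 (by decide) (by decide)
        (by linear_combination (norm := module) hsum) (ne_of_lt hi) (by nlinarith) (by nlinarith)
  · -- i = 2 (negative), j = 0 (positive), k = 1
    rcases le_or_gt (g 1) 0 with hk | hk
    · exact aux_pick a ha g 0 2 1 (by decide) (by decide)
        (by linear_combination (norm := module) hsum) (ne_of_gt hj) (by nlinarith) (by nlinarith)
    · exact aux_pick a ha g 2 0 1 (by decide) (by decide)
        (by linear_combination (norm := module) hsum) (ne_of_lt hi) (by nlinarith) (by nlinarith)
  · -- i = 2 (negative), j = 1 (positive), k = 0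
    rcases le_or_gt (g 0) 0 with hk | hk
    · exact aux_pick a ha g 1 2 0 (by decide) (by decide)
        (by linear_combination (norm := module) hsum) (ne_of_gt hj) (by nlinarith) (by nlinarith)
    · exact aux_pick a ha g 2 1 0 (by decide) (by decide)
        (by linear_combination (norm := module) hsum) (ne_of_lt hi) (by nlinarith) (by nlinarith)
  · exact absurd rfl hij
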